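/- If f = λI + F is a formal power series with λ ≠ 0, F ∈ O_2, and F has positive radius of convergence, then the compositional inverse series f^{-1} = λ^{-1}I + G also has positive radius of convergence. -/

import Mathlib

open scoped ENNReal

noncomputable def pcoeff (f : PowerSeries ℂ) (k : ℕ) : ℂ := PowerSeries.coeff (R := ℂ) k f

/-- Composition of formal power series: (f∘g)_m = Σ_{k=0}^m f_k (g^k)_m. -/
noncomputable def pcomp (f g : PowerSeries ℂ) : PowerSeries ℂ :=
  PowerSeries.mk fun m => ∑ k ∈ Finset.range (m + 1), pcoeff f k * pcoeff (g ^ k) m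

/-- f ∈ O_m : the first m coefficients vanish. -/
def inO (m : ℕ) (f : PowerSeries ℂ) : Prop := ∀ i < m, pcoeff f i = 0

/-- Truncation [f]_d = f_0 + f_1 z + ... + f_d z^d, as a power series. -/
noncomputable def ptrunc (d : ℕ) (f : PowerSeries ℂ) : PowerSeries ℂ :=
  PowerSeries.mk fun k => if k ≤ d then pcoeff f k else 0

/-- Majorant evaluation f^(r) = Σ |f_k| r^k ∈ [0,∞]. -/
noncomputable def maj (f : PowerSeries ℂ) (r : ℝ≥0∞) : ℝ≥0∞ :=
  ∑' k, (‖pcoeff f k‖₊ : ℝ≥0∞) * r ^ k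

/-- Evaluation of a power series at a point. -/
noncomputable def peval (f : PowerSeries ℂ) (z : ℂ) : ℂ := ∑' k, pcoeff f k * z ^ k

/-- f has positive radius of convergence. -/
def posRadius (f : PowerSeries ℂ) : Prop :=
  ∃ r : ℝ, 0 < r ∧ Summable fun k => ‖pcoeff f k‖ * r ^ k

/-- The operator L_λ(H) = H∘(λI) − λH. -/
noncomputable def Lop (l : ℂ) (H : PowerSeries ℂ) : PowerSeries ℂ :=
  pcomp H (l • PowerSeries.X) - l • H

open Finset

/-! ### Auxiliary combinatorial lemmas -/

/-- Product of the values of a function over the blocks of a composition. -/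
lemma comp_prod_blocks {n : ℕ} (c : Composition n) (g : ℕ → ℂ) :
    ∏ i, g (c.blocksFun i) = (c.blocks.map g).prod := by
  conv_rhs => rw [← List.ofFn_get c.blocks]
  rw [List.map_ofFn, List.prod_ofFn]
  rfl

lemma ofFn_blocksFun {n : ℕ} (c : Composition n) : List.ofFn c.blocksFun = c.blocks :=
  List.ofFn_get c.blocks

/-- The composition built from a tuple of positive integers summing to `n`. -/
def toComp (n k : ℕ) (l : ℕ →₀ ℕ) (hsum : ∑ i ∈ range k, l i = n)
    (hpos : ∀ i ∈ range k, l i ≠ 0) : Composition n :=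
  ⟨List.ofFn (fun j : Fin k => l j), by
      intro x hx
      rw [List.mem_ofFn] at hx
      obtain ⟨j, hj⟩ := hx
      subst hj
      exact Nat.pos_of_ne_zero (hpos j (mem_range.2 j.2)), by
      rw [List.sum_ofFn, Fin.sum_univ_eq_sum_range]
      exact hsum⟩

lemma toComp_length (n k : ℕ) (l : ℕ →₀ ℕ) (hsum : ∑ i ∈ range k, l i = n)
    (hpos : ∀ i ∈ range k, l i ≠ 0) : (toComp n k l hsum hpos).length = k := by
  simp [toComp, Composition.length]

lemma toComp_blocks (n k : ℕ) (l : ℕ →₀ ℕ) (hsum : ∑ i ∈ range k, l i = n)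
    (hpos : ∀ i ∈ range k, l i ≠ 0) :
    (toComp n k l hsum hpos).blocks = List.ofFn (fun j : Fin k => l j) := rfl

lemma toComp_blocksFun (n k : ℕ) (l : ℕ →₀ ℕ) (hsum : ∑ i ∈ range k, l i = n)
    (hpos : ∀ i ∈ range k, l i ≠ 0) (i : Fin (toComp n k l hsum hpos).length) :
    (toComp n k l hsum hpos).blocksFun i = l i := by
  simp [Composition.blocksFun, toComp_blocks, List.get_ofFn, List.get_eq_getElem, List.getElem_ofFn]
  exact List.getElem_ofFn (f := fun j : Fin k => l j) (h := i.2)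

/-- The tuple of blocks of a composition, as a finitely supported function. -/
noncomputable def fromComp (n : ℕ) (c : Composition n) : ℕ →₀ ℕ :=
  Finsupp.onFinset (range c.length)
    (fun i => if h : i < c.length then c.blocksFun ⟨i, h⟩ else 0)
    (by intro i hi; rw [mem_range]; by_contra h; simp [h] at hi)

lemma fromComp_apply_lt (n : ℕ) (c : Composition n) {i : ℕ} (h : i < c.length) :
    fromComp n c i = c.blocksFun ⟨i, h⟩ := by
  simp [fromComp, h]

lemma fromComp_apply_ge (n : ℕ) (c : Composition n) {i : ℕ} (h : ¬ i < c.length) :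
    fromComp n c i = 0 := by
  simp [fromComp, h]

lemma fromComp_ofFn_eq (n : ℕ) (c : Composition n) :
    (List.ofFn fun j : Fin c.length => fromComp n c j) = c.blocks := by
  rw [← ofFn_blocksFun c]
  exact congrArg _ (funext fun j => fromComp_apply_lt n c j.2)

lemma fromComp_support (n : ℕ) (c : Composition n) :
    (fromComp n c).support ⊆ range c.length := by
  intro i hi
  rw [Finsupp.mem_support_iff] at hi
  rw [mem_range]
  by_contra hlt
  exact hi (fromComp_apply_ge n c hlt)

/-- Key combinatorial identity: the coefficients of `pcomp f h` as a sum over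
compositions, when `h` has vanishing constant term. -/
lemma pcomp_coeff_compositions (f h : PowerSeries ℂ) (h0 : pcoeff h 0 = 0) (n : ℕ) :
    pcoeff (pcomp f h) n =
      ∑ c : Composition n, pcoeff f c.length * ∏ i, pcoeff h (c.blocksFun i) := by
  classical
  have e1 : pcoeff (pcomp f h) n
      = ∑ k ∈ range (n+1), ∑ l ∈ ((finsuppAntidiag (range k) n).filter
          (fun l => ∀ i ∈ range k, l i ≠ 0)),
          pcoeff f k * ∏ i ∈ range k, pcoeff h (l i) := by
    simp only [pcomp, pcoeff, PowerSeries.coeff_mk]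
    refine Finset.sum_congr rfl fun k _ => ?_
    rw [PowerSeries.coeff_pow, Finset.mul_sum]
    rw [Finset.sum_filter_of_ne]
    intro l hl hne i hi hzero
    refine hne ?_
    rw [Finset.prod_eq_zero hi (by rw [hzero]; exact h0), mul_zero]
  rw [e1, Finset.sum_sigma']
  refine Finset.sum_bij'
    (fun a ha => toComp n a.1 a.2
      (by simp only [Finset.mem_sigma, mem_filter, mem_finsuppAntidiag] at ha; exact ha.2.1.1)
      (by simp only [Finset.mem_sigma, mem_filter, mem_finsuppAntidiag] at ha; exact ha.2.2))
    (fun c _ => ⟨c.length, fromComp n c⟩) (fun a ha => mem_univ _) ?_ ?_ ?_ ?_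
  · -- backward map lands in the sigma set
    intro c _
    rw [Finset.mem_sigma]
    constructor
    · exact mem_range.2 (Nat.lt_succ_of_le c.length_le)
    · rw [mem_filter, mem_finsuppAntidiag]
      refine ⟨⟨?_, ?_⟩, ?_⟩
      · have hv : ∀ i : Fin c.length, fromComp n c ↑i = c.blocksFun i :=
          fun i => fromComp_apply_lt n c i.2
        calc (range c.length).sum ⇑(fromComp n c)
            = ∑ i : Fin c.length, c.blocksFun i := by
              rw [← Fin.sum_univ_eq_sum_range]
              exact Finset.sum_congr rfl fun i _ => hv i
          _ = n := c.sum_blocksFun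
      · exact fromComp_support n c
      · intro i hi
        rw [fromComp_apply_lt n c (mem_range.1 hi)]
        exact Nat.one_le_iff_ne_zero.1 (c.one_le_blocksFun _)
  · -- left inverse
    intro a ha
    simp only [Finset.mem_sigma, mem_filter, mem_finsuppAntidiag] at ha
    obtain ⟨hk, ⟨⟨hsum, hsupp⟩, hpos⟩⟩ := ha
    have hlen : (toComp n a.1 a.2 hsum hpos).length = a.1 := toComp_length _ _ _ _ _
    refine Sigma.ext hlen (heq_of_eq ?_)
    ext i
    by_cases hi : i < (toComp n a.1 a.2 hsum hpos).length
    · rw [fromComp_apply_lt n _ hi, toComp_blocksFun n a.1 a.2 hsum hpos ⟨i, hi⟩]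
    · rw [fromComp_apply_ge n _ hi]
      rw [hlen] at hi
      have hns : i ∉ a.2.support := fun hmem => hi (mem_range.1 (hsupp hmem))
      exact (Finsupp.notMem_support_iff.1 hns).symm
  · -- right inverse
    intro c _
    apply Composition.ext
    rw [toComp_blocks]
    exact fromComp_ofFn_eq n c
  · -- values match
    intro a ha
    simp only [Finset.mem_sigma, mem_filter, mem_finsuppAntidiag] at ha
    obtain ⟨hk, ⟨⟨hsum, hsupp⟩, hpos⟩⟩ := ha
    rw [comp_prod_blocks, toComp_blocks, List.map_ofFn, List.prod_ofFn, toComp_length]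
    simp only [Function.comp]
    rw [Fin.prod_univ_eq_prod_range (fun i => pcoeff h (a.2 i)) a.1]

/-- Uniqueness of compositional inverse coefficients. -/
lemma pcomp_right_unique (f g₁ g₂ : PowerSeries ℂ) (hf1 : pcoeff f 1 ≠ 0)
    (h₁0 : pcoeff g₁ 0 = 0) (h₂0 : pcoeff g₂ 0 = 0)
    (e : pcomp f g₁ = pcomp f g₂) : ∀ n, pcoeff g₁ n = pcoeff g₂ n := by
  classical
  intro n
  induction n using Nat.strong_induction_on with
  | _ n IH =>
  match n, IH with
  | 0, _ => exact h₁0.trans h₂0.symm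
  | (m+1), IH =>
    have hpos : 0 < m + 1 := Nat.succ_pos m
    have A : ∑ c : Composition (m+1), pcoeff f c.length * ∏ i, pcoeff g₁ (c.blocksFun i)
           = ∑ c : Composition (m+1), pcoeff f c.length * ∏ i, pcoeff g₂ (c.blocksFun i) := by
      rw [← pcomp_coeff_compositions f g₁ h₁0, ← pcomp_coeff_compositions f g₂ h₂0, e]
    have hmem : Composition.single (m+1) hpos ∈ (univ : Finset (Composition (m+1))) :=
      mem_univ _
    rw [← Finset.sum_erase_add _ _ hmem, ← Finset.sum_erase_add _ _ hmem] at A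
    have hrest : ∑ c ∈ univ.erase (Composition.single (m+1) hpos),
          pcoeff f c.length * ∏ i, pcoeff g₁ (c.blocksFun i)
        = ∑ c ∈ univ.erase (Composition.single (m+1) hpos),
          pcoeff f c.length * ∏ i, pcoeff g₂ (c.blocksFun i) := by
      refine Finset.sum_congr rfl fun c hc => ?_
      have hne : c ≠ Composition.single (m+1) hpos := (Finset.mem_erase.1 hc).1
      have hlt := (Composition.ne_single_iff hpos).1 hne
      congr 1
      exact Finset.prod_congr rfl fun i _ => IH _ (hlt i)
    rw [hrest] at A
    have B : pcoeff f (Composition.single (m+1) hpos).length *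
          ∏ i, pcoeff g₁ ((Composition.single (m+1) hpos).blocksFun i)
        = pcoeff f (Composition.single (m+1) hpos).length *
          ∏ i, pcoeff g₂ ((Composition.single (m+1) hpos).blocksFun i) :=
      add_left_cancel A
    have hprod : ∀ g : PowerSeries ℂ, ∏ i, pcoeff g ((Composition.single (m+1) hpos).blocksFun i)
        = pcoeff g (m+1) := fun g => by
      rw [Fintype.prod_eq_single (⟨0, by simp⟩ : Fin (Composition.single (m+1) hpos).length)]
      · rfl
      · intro j hj
        exact absurd (Fin.ext (by have := j.2; simp only [Composition.single_length] at this; show j.1 = 0; omega)) hj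
    rw [hprod, hprod] at B
    simp only [Composition.single_length, Composition.single_blocksFun] at B
    exact mul_left_cancel₀ hf1 B

/-- Coefficient formula for composition of formal multilinear series in one dimension. -/
lemma fms_comp_coeff (p q : FormalMultilinearSeries ℂ ℂ ℂ) (n : ℕ) :
    (p.comp q).coeff n = ∑ c : Composition n, p.coeff c.length * ∏ i, q.coeff (c.blocksFun i) := by
  rw [FormalMultilinearSeries.coeff]
  show (∑ c : Composition n, p.compAlongComposition q c) 1 = _
  rw [ContinuousMultilinearMap.sum_apply]
  refine Finset.sum_congr rfl fun c _ => ?_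
  rw [FormalMultilinearSeries.compAlongComposition_apply]
  have : q.applyComposition c 1 = fun i => q.coeff (c.blocksFun i) := rfl
  rw [this, p.apply_eq_prod_smul_coeff, smul_eq_mul, mul_comm]

theorem inverse_posRadius (l : ℂ) (hl : l ≠ 0) (F G : PowerSeries ℂ)
    (hF : inO 2 F) (hFrad : posRadius F) (hG : inO 2 G)
    (hinv1 : pcomp (l • PowerSeries.X + F) (l⁻¹ • PowerSeries.X + G) = PowerSeries.X)
    (hinv2 : pcomp (l⁻¹ • PowerSeries.X + G) (l • PowerSeries.X + F) = PowerSeries.X) :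
    posRadius (l⁻¹ • PowerSeries.X + G) := by
  classical
  set f : PowerSeries ℂ := l • PowerSeries.X + F with hfdef
  set g : PowerSeries ℂ := l⁻¹ • PowerSeries.X + G with hgdef
  have hF0 : pcoeff F 0 = 0 := hF 0 (by norm_num)
  have hF1 : pcoeff F 1 = 0 := hF 1 (by norm_num)
  have hG0 : pcoeff G 0 = 0 := hG 0 (by norm_num)
  have cF0 : PowerSeries.coeff (R := ℂ) 0 F = 0 := hF0
  have cF1 : PowerSeries.coeff (R := ℂ) 1 F = 0 := hF1
  have cG0 : PowerSeries.coeff (R := ℂ) 0 G = 0 := hG0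
  have cF0' : PowerSeries.constantCoeff (R := ℂ) F = 0 := by
    rw [← PowerSeries.coeff_zero_eq_constantCoeff]; exact cF0
  have cG0' : PowerSeries.constantCoeff (R := ℂ) G = 0 := by
    rw [← PowerSeries.coeff_zero_eq_constantCoeff]; exact cG0
  have hf0 : pcoeff f 0 = 0 := by
    simp [pcoeff, hfdef, cF0, cF0']
  have hf1 : pcoeff f 1 = l := by
    simp [pcoeff, hfdef, cF1]
  have hfk : ∀ k, 2 ≤ k → pcoeff f k = pcoeff F k := by
    intro k hk
    have hk1 : k ≠ 1 := by omega
    simp [pcoeff, hfdef, PowerSeries.coeff_X, hk1]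
  have hg0 : pcoeff g 0 = 0 := by
    simp [pcoeff, hgdef, cG0, cG0']
  -- the formal multilinear series of f
  set p : FormalMultilinearSeries ℂ ℂ ℂ := FormalMultilinearSeries.ofScalars ℂ (pcoeff f)
    with hpdef
  have hpcoeff : ∀ k, p.coeff k = pcoeff f k := by
    intro k
    simp [hpdef, FormalMultilinearSeries.coeff, FormalMultilinearSeries.ofScalars,
      List.prod_ofFn]
  have hpnorm : ∀ k, ‖p k‖ = ‖pcoeff f k‖ := fun k =>
    FormalMultilinearSeries.ofScalars_norm ℂ (pcoeff f) k
  -- positive radius of p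
  obtain ⟨r, hr, hsum⟩ := hFrad
  have hsum' : Summable fun k => ‖p k‖ * r ^ k := by
    have h2 : Summable fun k => ‖pcoeff F (k+2)‖ * r ^ (k+2) :=
      (summable_nat_add_iff (f := fun k => ‖pcoeff F k‖ * r ^ k) 2).2 hsum
    have h3 : Summable fun k => ‖p (k+2)‖ * r ^ (k+2) := by
      refine h2.congr fun k => ?_
      rw [hpnorm, hfk _ (by omega)]
    exact (summable_nat_add_iff (f := fun k => ‖p k‖ * r ^ k) 2).1 h3
  set r' : NNReal := ⟨r, hr.le⟩ with hr'def
  have hrad : 0 < p.radius := by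
    refine lt_of_lt_of_le ?_ (p.le_radius_of_summable_norm (r := r') hsum')
    exact_mod_cast (show (0:NNReal) < r' from by exact_mod_cast hr)
  -- the linear isomorphism
  set i : ℂ ≃L[ℂ] ℂ := ContinuousLinearEquiv.unitsEquivAut ℂ (Units.mk0 l hl) with hidef
  have hp1 : p 1 = (continuousMultilinearCurryFin1 ℂ ℂ ℂ).symm (i : ℂ →L[ℂ] ℂ) := by
    ext v
    simp [hpdef, FormalMultilinearSeries.ofScalars, hf1, hidef,
      ContinuousLinearEquiv.unitsEquivAut, mul_comm]
  set q : FormalMultilinearSeries ℂ ℂ ℂ := p.rightInv i 0 with hqdef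
  have hqrad : 0 < q.radius := FormalMultilinearSeries.radius_rightInv_pos_of_radius_pos hrad
  -- the inverse power series from q
  set qs : PowerSeries ℂ := PowerSeries.mk (fun k => q.coeff k) with hqsdef
  have hqs : ∀ k, pcoeff qs k = q.coeff k := fun k => by
    simp [pcoeff, hqsdef, PowerSeries.coeff_mk]
  have hq0 : pcoeff qs 0 = 0 := by
    rw [hqs 0, FormalMultilinearSeries.coeff, hqdef,
      FormalMultilinearSeries.rightInv_coeff_zero]
    rfl
  -- p ∘ q = id
  have hcomp : p.comp q = FormalMultilinearSeries.id ℂ ℂ (p 0 0) :=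
    p.comp_rightInv i 0 hp1
  have hp00 : p 0 0 = 0 := by
    simp [hpdef, FormalMultilinearSeries.ofScalars, hf0]
  rw [hp00] at hcomp
  -- pcomp f qs = X
  have hcompq : pcomp f qs = PowerSeries.X := by
    ext n
    have h1 : PowerSeries.coeff (R := ℂ) n (pcomp f qs) = pcoeff (pcomp f qs) n := rfl
    rw [h1, pcomp_coeff_compositions f qs hq0 n]
    have h2 : ∑ c : Composition n, pcoeff f c.length * ∏ i, pcoeff qs (c.blocksFun i)
        = (p.comp q).coeff n := by
      rw [fms_comp_coeff]
      refine Finset.sum_congr rfl fun c _ => ?_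
      rw [hpcoeff]
      congr 1
      exact Finset.prod_congr rfl fun j _ => hqs _
    rw [h2, hcomp]
    rw [PowerSeries.coeff_X]
    match n with
    | 0 => simpa using FormalMultilinearSeries.id_apply_zero ℂ ℂ (0:ℂ) 1
    | 1 => simpa using FormalMultilinearSeries.id_apply_one ℂ ℂ (0:ℂ) 1
    | (m+2) =>
      rw [if_neg (by omega), FormalMultilinearSeries.coeff,
        FormalMultilinearSeries.id_apply_of_one_lt ℂ ℂ (0:ℂ) (by omega : 1 < m+2)]
      rfl
  -- uniqueness of coefficients
  have huniq : ∀ k, pcoeff g k = pcoeff qs k := by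
    refine pcomp_right_unique f g qs (hf1 ▸ hl) hg0 hq0 ?_
    rw [hinv1, hcompq]
  -- transfer positive radius
  obtain ⟨r2, hr2pos, hr2lt⟩ := ENNReal.lt_iff_exists_nnreal_btwn.1 hqrad
  have hsum2 : Summable fun k => ‖q k‖ * (r2:ℝ) ^ k := q.summable_norm_mul_pow hr2lt
  have hr2pos' : (0:ℝ) < r2 := by exact_mod_cast hr2pos
  refine ⟨r2, hr2pos', ?_⟩
  refine Summable.of_nonneg_of_le (fun k => by positivity) (fun k => ?_) hsum2
  have hle : ‖pcoeff g k‖ ≤ ‖q k‖ := by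
    rw [huniq k, hqs k, FormalMultilinearSeries.coeff]
    have h := (q k).le_opNorm 1
    simpa using h
  have : (0:ℝ) ≤ (r2:ℝ) ^ k := by positivity
  exact mul_le_mul_of_nonneg_right hle this
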